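/- Let ψ be a smooth closed differential form on U \ L, where U ⊆ ℂⁿ is open and L = {λ = 0} with λ holomorphic on U and dλ nonvanishing on L. Suppose λψ extends smoothly to U (ψ has a first-order polar singularity along L). If ψ = (dλ/λ) ∧ χ₁ + θ₁ = (dλ/λ) ∧ χ₂ + θ₂ with χᵢ, θᵢ smooth forms on U, then the restrictions χ₁|_L and χ₂|_L agree; i.e., the Leray residue form res[ψ] := χ|_L is well-defined. -/

import Mathlib

open Complex Metric Set Filter Topology

/-- Directional continuity of the derivative of a holomorphic function on an open set,
proved via the Schwarz lemma on complex lines. -/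
lemma fderiv_apply_tendsto {n : ℕ} {U : Set (Fin n → ℂ)} (hU : IsOpen U)
    {lam : (Fin n → ℂ) → ℂ} (hlam : DifferentiableOn ℂ lam U)
    {a : Fin n → ℂ} (ha : a ∈ U) (x : Fin n → ℂ) :
    Tendsto (fun z => fderiv ℂ lam z x) (𝓝 a) (𝓝 (fderiv ℂ lam a x)) := by
  rw [Metric.tendsto_nhds]
  intro ε hε
  -- open ball around a inside U
  obtain ⟨η, hη, hball⟩ := Metric.isOpen_iff.1 hU a ha
  set La := fderiv ℂ lam a with hLa
  -- one-variable differentiability at a in direction x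
  have haff : ∀ z : Fin n → ℂ, HasDerivAt (fun s : ℂ => z + s • x) x 0 := fun z =>
    by simpa using ((hasDerivAt_id (0:ℂ)).smul_const x).const_add z
  have hda : HasDerivAt (fun s : ℂ => lam (a + s • x)) (La x) 0 := by
    have h1 : HasFDerivAt lam La a := (hlam.differentiableAt (hU.mem_nhds ha)).hasFDerivAt
    have h2 : HasFDerivAt lam La (a + (0:ℂ) • x) := by simpa using h1
    exact h2.comp_hasDerivAt 0 (haff a)
  -- smallness of the remainder along the line at a
  have hlo := hda.isLittleO
  have h4 : (0:ℝ) < ε/4 := by positivity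
  have hev : ∀ᶠ s : ℂ in 𝓝 0, ‖lam (a + s • x) - lam a - s • La x‖ ≤ ε/4 * ‖s‖ := by
    have := hlo.def h4
    simpa only [zero_smul, add_zero, sub_zero, ContinuousLinearMap.smulRight_apply,
      ContinuousLinearMap.one_apply] using this
  obtain ⟨ρ₀, hρ₀, hsmall⟩ := Metric.eventually_nhds_iff_ball.1 hev
  set ρ : ℝ := min (ρ₀/2) (η/(4*(‖x‖+1))) with hρdef
  have hρ : 0 < ρ := lt_min (by positivity) (by positivity)
  have hρx : ρ * ‖x‖ ≤ η/4 := by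
    have h1 : ρ ≤ η/(4*(‖x‖+1)) := min_le_right _ _
    have h2 : ‖x‖ ≤ ‖x‖ + 1 := by linarith
    calc ρ * ‖x‖ ≤ (η/(4*(‖x‖+1))) * (‖x‖+1) := by
          apply mul_le_mul h1 h2 (norm_nonneg x) (by positivity)
      _ = η/4 := by field_simp
  -- points of the tube stay in U
  have htube : ∀ z : Fin n → ℂ, dist z a ≤ η/2 → ∀ s : ℂ, ‖s‖ ≤ ρ → z + s • x ∈ U := by
    intro z hz s hs
    apply hball
    have : ‖z + s • x - a‖ ≤ ‖z - a‖ + ‖s • x‖ := by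
      have : z + s • x - a = (z - a) + s • x := by abel
      rw [this]; exact norm_add_le _ _
    have hsx : ‖s • x‖ ≤ η/4 := by
      rw [norm_smul]
      calc ‖s‖ * ‖x‖ ≤ ρ * ‖x‖ := mul_le_mul_of_nonneg_right hs (norm_nonneg x)
        _ ≤ η/4 := hρx
    rw [mem_ball, dist_eq_norm]
    calc ‖z + s • x - a‖ ≤ ‖z - a‖ + ‖s • x‖ := this
      _ ≤ η/2 + η/4 := add_le_add (by rwa [dist_eq_norm] at hz) hsx
      _ < η := by linarith
  -- the remainder function φ, continuous on a compact tube
  set φ : (Fin n → ℂ) × ℂ → ℂ := fun p => lam (p.1 + p.2 • x) - p.2 • La x - lam p.1 with hφdef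
  have hφa : ∀ s : ℂ, ‖s‖ ≤ ρ → ‖φ (a, s)‖ ≤ ε/4 * ρ := by
    intro s hs
    have hs' : s ∈ ball (0:ℂ) ρ₀ := by
      rw [mem_ball, dist_zero_right]
      calc ‖s‖ ≤ ρ := hs
        _ ≤ ρ₀/2 := min_le_left _ _
        _ < ρ₀ := by linarith
    have h1 := hsmall s hs'
    have h2 : φ (a, s) = lam (a + s • x) - lam a - s • La x := by
      simp only [hφdef]; abel
    rw [h2]
    calc ‖lam (a + s • x) - lam a - s • La x‖ ≤ ε/4 * ‖s‖ := h1
      _ ≤ ε/4 * ρ := mul_le_mul_of_nonneg_left hs (by positivity)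
  -- uniform continuity on a compact tube
  set C : Set ((Fin n → ℂ) × ℂ) := closedBall a (η/2) ×ˢ closedBall (0:ℂ) ρ with hCdef
  have hCU : ∀ p ∈ C, p.1 + p.2 • x ∈ U := by
    intro p hp
    rw [hCdef, mem_prod] at hp
    exact htube p.1 (mem_closedBall.1 hp.1) p.2 (by simpa [mem_closedBall_zero_iff] using hp.2)
  have hC1U : ∀ p ∈ C, p.1 ∈ U := by
    intro p hp
    rw [hCdef, mem_prod] at hp
    apply hball
    rw [mem_ball]
    calc dist p.1 a ≤ η/2 := mem_closedBall.1 hp.1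
      _ < η := by linarith
  have hφc : ContinuousOn φ C := by
    have hc1 : ContinuousOn (fun p : (Fin n → ℂ) × ℂ => lam (p.1 + p.2 • x)) C :=
      hlam.continuousOn.comp (by fun_prop) hCU
    have hc2 : ContinuousOn (fun p : (Fin n → ℂ) × ℂ => lam p.1) C :=
      hlam.continuousOn.comp continuous_fst.continuousOn hC1U
    exact (hc1.sub (Continuous.continuousOn (by fun_prop))).sub hc2
  have hCcomp : IsCompact C := (isCompact_closedBall _ _).prod (isCompact_closedBall _ _)
  have huc := hCcomp.uniformContinuousOn_of_continuous hφc
  rw [Metric.uniformContinuousOn_iff] at huc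
  obtain ⟨δ₀, hδ₀, hucd⟩ := huc (ε/4 * ρ) (by positivity)
  rw [Metric.eventually_nhds_iff]
  refine ⟨min δ₀ (η/2), lt_min hδ₀ (by positivity), ?_⟩
  intro z hz
  have hzδ : dist z a < δ₀ := lt_of_lt_of_le hz (min_le_left _ _)
  have hzη : dist z a ≤ η/2 := le_of_lt (lt_of_lt_of_le hz (min_le_right _ _))
  have hzU : z ∈ U := by
    apply hball; rw [mem_ball]; linarith
  -- bound on φ(z, s)
  have hφz : ∀ s : ℂ, ‖s‖ ≤ ρ → ‖φ (z, s)‖ < ε/2 * ρ := by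
    intro s hs
    have hpC : (z, s) ∈ C := by
      rw [hCdef, mem_prod]
      exact ⟨mem_closedBall.2 hzη, by simpa [mem_closedBall_zero_iff] using hs⟩
    have haC : (a, s) ∈ C := by
      rw [hCdef, mem_prod]
      exact ⟨mem_closedBall_self (by positivity), by simpa [mem_closedBall_zero_iff] using hs⟩
    have hd : dist ((z, s) : (Fin n → ℂ) × ℂ) (a, s) < δ₀ := by
      simpa [Prod.dist_eq] using hzδ
    have h1 := hucd _ hpC _ haC hd
    calc ‖φ (z, s)‖ ≤ ‖φ (a, s)‖ + dist (φ (z, s)) (φ (a, s)) := by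
          rw [dist_eq_norm]
          calc ‖φ (z, s)‖ = ‖φ (a, s) + (φ (z, s) - φ (a, s))‖ := by ring_nf
            _ ≤ ‖φ (a, s)‖ + ‖φ (z, s) - φ (a, s)‖ := norm_add_le _ _
      _ < ε/4 * ρ + ε/4 * ρ := by
          have := hφa s hs
          have h2 : dist (φ (z, s)) (φ (a, s)) < ε/4 * ρ := h1
          linarith
      _ = ε/2 * ρ := by ring
  -- Schwarz lemma for f(s) = lam (z + s•x) - s • La x on ball 0 ρ
  set f : ℂ → ℂ := fun s => lam (z + s • x) - s • La x with hfdef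
  have hfd : DifferentiableOn ℂ f (ball (0:ℂ) ρ) := by
    apply DifferentiableOn.sub
    · apply hlam.comp
      · exact ((differentiable_id.smul_const x).const_add z).differentiableOn
      · intro s hs
        exact htube z hzη s (le_of_lt (by simpa [mem_ball, dist_zero_right] using hs))
    · exact (differentiable_id.smul_const (La x)).differentiableOn
  have hf0 : f 0 = lam z := by simp [hfdef]
  have hmaps : MapsTo f (ball (0:ℂ) ρ) (ball (f 0) (ε/2 * ρ)) := by
    intro s hs
    rw [mem_ball, dist_eq_norm, hf0]
    have hfs : f s - lam z = φ (z, s) := by simp only [hfdef, hφdef]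
    rw [hfs]
    exact hφz s (le_of_lt (by simpa [mem_ball, dist_zero_right] using hs))
  have hder := Complex.norm_deriv_le_div_of_mapsTo_ball hfd (hmaps.mono_right ball_subset_closedBall) hρ
  have hfderiv : HasDerivAt f (fderiv ℂ lam z x - La x) 0 := by
    have h1 : HasFDerivAt lam (fderiv ℂ lam z) z :=
      (hlam.differentiableAt (hU.mem_nhds hzU)).hasFDerivAt
    have h2 : HasFDerivAt lam (fderiv ℂ lam z) (z + (0:ℂ) • x) := by simpa using h1
    have h3 : HasDerivAt (fun s : ℂ => lam (z + s • x)) (fderiv ℂ lam z x) 0 := by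
      exact h2.comp_hasDerivAt 0 (haff z)
    exact h3.sub (by simpa using (hasDerivAt_id (0:ℂ)).smul_const (La x))
  rw [hfderiv.deriv] at hder
  rw [dist_eq_norm]
  calc ‖fderiv ℂ lam z x - La x‖ ≤ ε/2 * ρ / ρ := hder
    _ = ε/2 := by field_simp
    _ < ε := by linarith

/-- well-definedness of the Leray residue form.  A degree-m form is encoded
by its values on tuples of tangent vectors.  If ψ = (dλ/λ)∧χ₁ + θ₁ = (dλ/λ)∧χ₂ + θ₂ on
U \ L with χᵢ, θᵢ continuous on U, λ holomorphic with dλ ≠ 0 on L = {λ = 0}, then the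
restrictions of χ₁ and χ₂ to L (i.e. their values at points of L on tuples of vectors
tangent to L) coincide. -/
theorem leray_residue_well_defined {n r : ℕ} (U : Set (Fin n → ℂ)) (hU : IsOpen U)
    (lam : (Fin n → ℂ) → ℂ) (hlam : DifferentiableOn ℂ lam U)
    (hgrad : ∀ a ∈ U, lam a = 0 → fderiv ℂ lam a ≠ 0)
    (ψ θ₁ θ₂ : (Fin n → ℂ) → (Fin (r + 1) → (Fin n → ℂ)) → ℂ)
    (χ₁ χ₂ : (Fin n → ℂ) → (Fin r → (Fin n → ℂ)) → ℂ)
    (hχ₁ : ∀ v, ContinuousOn (fun z => χ₁ z v) U)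
    (hχ₂ : ∀ v, ContinuousOn (fun z => χ₂ z v) U)
    (hθ₁ : ∀ v, ContinuousOn (fun z => θ₁ z v) U)
    (hθ₂ : ∀ v, ContinuousOn (fun z => θ₂ z v) U)
    (hdec₁ : ∀ z ∈ U, lam z ≠ 0 → ∀ v : Fin (r + 1) → (Fin n → ℂ),
      ψ z v = (∑ i : Fin (r + 1), (-1 : ℂ) ^ (i : ℕ) * (fderiv ℂ lam z (v i) / lam z) *
        χ₁ z (fun j => v (i.succAbove j))) + θ₁ z v)
    (hdec₂ : ∀ z ∈ U, lam z ≠ 0 → ∀ v : Fin (r + 1) → (Fin n → ℂ),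
      ψ z v = (∑ i : Fin (r + 1), (-1 : ℂ) ^ (i : ℕ) * (fderiv ℂ lam z (v i) / lam z) *
        χ₂ z (fun j => v (i.succAbove j))) + θ₂ z v) :
    ∀ a ∈ U, lam a = 0 → ∀ w : Fin r → (Fin n → ℂ),
      (∀ i, fderiv ℂ lam a (w i) = 0) → χ₁ a w = χ₂ a w := by
  intro a ha h0 w hw
  obtain ⟨u, hu⟩ : ∃ u, fderiv ℂ lam a u ≠ 0 := by
    by_contra h
    push_neg at h
    exact hgrad a ha h0 (ContinuousLinearMap.ext fun y => by simpa using h y)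
  set v : Fin (r+1) → (Fin n → ℂ) := Fin.cons u w with hv
  set S : (Fin n → ℂ) → ℂ := fun z => ∑ i : Fin (r+1), (-1:ℂ)^(i:ℕ) * fderiv ℂ lam z (v i) *
    (χ₁ z (fun j => v (i.succAbove j)) - χ₂ z (fun j => v (i.succAbove j))) with hS
  have key : ∀ z ∈ U, lam z ≠ 0 → S z = lam z * (θ₂ z v - θ₁ z v) := by
    intro z hz hlz
    have h1 := hdec₁ z hz hlz v
    have h2 := hdec₂ z hz hlz v
    have h3 : (∑ i : Fin (r + 1), (-1 : ℂ) ^ (i : ℕ) * (fderiv ℂ lam z (v i) / lam z) *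
          χ₁ z (fun j => v (i.succAbove j))) -
        (∑ i : Fin (r + 1), (-1 : ℂ) ^ (i : ℕ) * (fderiv ℂ lam z (v i) / lam z) *
          χ₂ z (fun j => v (i.succAbove j))) = θ₂ z v - θ₁ z v := by
      linear_combination h2 - h1
    have h4 : S z = lam z * ((∑ i : Fin (r + 1), (-1 : ℂ) ^ (i : ℕ) *
          (fderiv ℂ lam z (v i) / lam z) * χ₁ z (fun j => v (i.succAbove j))) -
        (∑ i : Fin (r + 1), (-1 : ℂ) ^ (i : ℕ) * (fderiv ℂ lam z (v i) / lam z) *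
          χ₂ z (fun j => v (i.succAbove j)))) := by
      rw [hS, mul_sub, Finset.mul_sum, Finset.mul_sum, ← Finset.sum_sub_distrib]
      apply Finset.sum_congr rfl
      intro i _
      field_simp
    rw [h4, h3]
  set zc : ℂ → (Fin n → ℂ) := fun t => a + t • u with hzc
  have hz0 : zc 0 = a := by simp [hzc]
  have hzcont : Continuous zc := by fun_prop
  have hzt : Tendsto zc (𝓝 0) (𝓝 a) := by
    have := hzcont.tendsto 0
    rwa [hz0] at this
  have hUev : ∀ᶠ t in 𝓝 (0:ℂ), zc t ∈ U := hzt (hU.mem_nhds ha)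
  have haffu : HasDerivAt (fun t : ℂ => a + t • u) u 0 := by
    simpa using ((hasDerivAt_id (0:ℂ)).smul_const u).const_add a
  have hlamline : HasDerivAt (fun t => lam (zc t)) (fderiv ℂ lam a u) 0 := by
    have h1 : HasFDerivAt lam (fderiv ℂ lam a) a :=
      (hlam.differentiableAt (hU.mem_nhds ha)).hasFDerivAt
    have h2 : HasFDerivAt lam (fderiv ℂ lam a) (a + (0:ℂ) • u) := by simpa using h1
    exact h2.comp_hasDerivAt 0 haffu
  have hne : ∀ᶠ t in 𝓝[≠] (0:ℂ), lam (zc t) ≠ 0 := by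
    have hslope := hasDerivAt_iff_tendsto_slope.1 hlamline
    have hev := hslope.eventually_ne hu
    filter_upwards [hev, self_mem_nhdsWithin] with t ht ht0
    intro hl
    apply ht
    have : lam (zc 0) = 0 := by rw [hz0]; exact h0
    simp [slope_def_field, hl, this]
  have hfder : ∀ y, Tendsto (fun t => fderiv ℂ lam (zc t) y) (𝓝 (0:ℂ))
      (𝓝 (fderiv ℂ lam a y)) := fun y => (fderiv_apply_tendsto hU hlam ha y).comp hzt
  have hχt : ∀ (χ : (Fin n → ℂ) → (Fin r → (Fin n → ℂ)) → ℂ),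
      (∀ v', ContinuousOn (fun z => χ z v') U) → ∀ v',
      Tendsto (fun t => χ (zc t) v') (𝓝 (0:ℂ)) (𝓝 (χ a v')) := by
    intro χ hχ v'
    exact ((hχ v').continuousAt (hU.mem_nhds ha)).tendsto.comp hzt
  have hT1 : Tendsto (fun t => S (zc t)) (𝓝 (0:ℂ)) (𝓝 (S a)) := by
    rw [hS]
    apply tendsto_finset_sum
    intro i _
    exact (tendsto_const_nhds.mul (hfder (v i))).mul
      ((hχt χ₁ hχ₁ _).sub (hχt χ₂ hχ₂ _))
  have hT2 : Tendsto (fun t => lam (zc t) * (θ₂ (zc t) v - θ₁ (zc t) v)) (𝓝 (0:ℂ)) (𝓝 0) := by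
    have hlc : Tendsto (fun t => lam (zc t)) (𝓝 (0:ℂ)) (𝓝 0) := by
      have := ((hlam.continuousOn.continuousAt (hU.mem_nhds ha)).tendsto).comp hzt
      rwa [h0] at this
    have := hlc.mul (((((hθ₂ v).continuousAt (hU.mem_nhds ha)).tendsto.comp hzt).sub
      (((hθ₁ v).continuousAt (hU.mem_nhds ha)).tendsto.comp hzt)))
    simpa using this
  have hSa : S a = 0 := by
    have hev : ∀ᶠ t in 𝓝[≠] (0:ℂ), S (zc t) = lam (zc t) * (θ₂ (zc t) v - θ₁ (zc t) v) := by
      filter_upwards [hUev.filter_mono nhdsWithin_le_nhds, hne] with t h1 h2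
      exact key _ h1 h2
    have hA : Tendsto (fun t => lam (zc t) * (θ₂ (zc t) v - θ₁ (zc t) v)) (𝓝[≠] (0:ℂ))
        (𝓝 (S a)) := (hT1.mono_left nhdsWithin_le_nhds).congr' hev
    exact tendsto_nhds_unique hA (hT2.mono_left nhdsWithin_le_nhds)
  have hred : S a = fderiv ℂ lam a u * (χ₁ a w - χ₂ a w) := by
    simp only [hS]
    rw [Fintype.sum_eq_single (0 : Fin (r+1))]
    · have h1 : v 0 = u := by simp [hv]
      have h2 : (fun j => v ((0 : Fin (r+1)).succAbove j)) = w := by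
        funext j
        simp [hv, Fin.succAbove_zero]
      rw [h1, h2]
      simp
    · intro i hi
      obtain ⟨j, rfl⟩ := Fin.eq_succ_of_ne_zero hi
      have : v j.succ = w j := by simp [hv]
      rw [this, hw j]
      ring
  rw [hred] at hSa
  rcases mul_eq_zero.1 hSa with h | h
  · exact absurd h hu
  · exact sub_eq_zero.1 h
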